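/- Let $X$ be a geodesic metric space and $|\nabla \cdot|$ a strong upper gradient. Let $a > 0$, $b \ge 0$, and let $\varphi \in C^1([0,1], \mathrm{Lip}_b(X))$ satisfy $\partial_s \varphi_s + a|\nabla \varphi_s|^2 + b\varphi_s^2 \le 0$. Then for any $x_0, x_1 \in X$, $\varphi_1(x_1) - \varphi_0(x_0) \le \frac{1}{4a} d(x_0, x_1)^2$. -/

import Mathlib

open Filter

/-- The local Lipschitz slope, the strong upper gradient used in the paper. -/
noncomputable def lipSlope {X : Type*} [MetricSpace X] (f : X → ℝ) (x : X) : ℝ :=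
  Filter.limsup (fun y => |f x - f y| / dist x y) (nhdsWithin x {x}ᶜ)

/-- In a geodesic metric space, any `C¹` family of bounded Lipschitz functions
`φ` satisfying the Hamilton–Jacobi inequality `∂_s φ_s + a|∇φ_s|² + bφ_s² ≤ 0`
satisfies `φ₁(x₁) - φ₀(x₀) ≤ d(x₀,x₁)²/(4a)`. -/
theorem stmt_17 {X : Type*} [MetricSpace X]
    (hgeo : ∀ x y : X, ∃ γ : ℝ → X, γ 0 = x ∧ γ 1 = y ∧
      ∀ s ∈ Set.Icc (0:ℝ) 1, ∀ t ∈ Set.Icc (0:ℝ) 1,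
        dist (γ s) (γ t) = |s - t| * dist x y)
    (a b : ℝ) (ha : 0 < a) (hb : 0 ≤ b)
    (φ φ' : ℝ → X → ℝ)
    (hC1 : ∀ x : X, ∀ s ∈ Set.Icc (0:ℝ) 1, HasDerivAt (fun u => φ u x) (φ' s x) s)
    (hLip : ∃ K, ∀ s ∈ Set.Icc (0:ℝ) 1, LipschitzWith K (φ s))
    (hbd : ∃ M, ∀ s ∈ Set.Icc (0:ℝ) 1, ∀ x : X, |φ s x| ≤ M)
    (hcont : Continuous fun pr : ℝ × X => φ' pr.1 pr.2)
    (hsub : ∀ s ∈ Set.Icc (0:ℝ) 1, ∀ x : X,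
      φ' s x + a * (lipSlope (φ s) x) ^ 2 + b * (φ s x) ^ 2 ≤ 0) :
    ∀ x₀ x₁ : X, φ 1 x₁ - φ 0 x₀ ≤ dist x₀ x₁ ^ 2 / (4 * a) := by
  obtain ⟨K, hK⟩ := hLip
  intro x₀ x₁
  obtain ⟨γ, hγ0, hγ1, hγd⟩ := hgeo x₀ x₁
  set d : ℝ := dist x₀ x₁ with hddef
  have hd0 : 0 ≤ d := dist_nonneg
  set C : ℝ := d ^ 2 / (4 * a) with hCdef
  set g : ℝ → ℝ := fun t => φ t (γ t) with hgdef
  -- γ is continuous on [0,1]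
  have cγ : ContinuousOn γ (Set.Icc 0 1) := by
    have : LipschitzOnWith (Real.toNNReal d) γ (Set.Icc 0 1) := by
      apply LipschitzOnWith.of_dist_le_mul
      intro z hz w hw
      rw [hγd z hz w hw, Real.coe_toNNReal d hd0, Real.dist_eq]
      exact le_of_eq (mul_comm _ _)
    exact this.continuousOn
  -- bound on φ' on a compact set
  have cmpct : IsCompact ((Set.Icc (0:ℝ) 1) ×ˢ (γ '' Set.Icc 0 1)) :=
    isCompact_Icc.prod (isCompact_Icc.image_of_continuousOn cγ)
  obtain ⟨M', hM'⟩ := cmpct.exists_bound_of_continuousOn hcont.continuousOn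
  -- time-Lipschitz estimate via MVT
  have hTime : ∀ y ∈ γ '' Set.Icc (0:ℝ) 1, ∀ w ∈ Set.Icc (0:ℝ) 1, ∀ z ∈ Set.Icc (0:ℝ) 1,
      |φ z y - φ w y| ≤ M' * |z - w| := by
    have main : ∀ y ∈ γ '' Set.Icc (0:ℝ) 1, ∀ w ∈ Set.Icc (0:ℝ) 1, ∀ z ∈ Set.Icc (0:ℝ) 1,
        w ≤ z → |φ z y - φ w y| ≤ M' * (z - w) := by
      intro y hy w hw z hz hwz
      rcases eq_or_lt_of_le hwz with rfl | hlt
      · simp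
      · have hsub' : Set.Icc w z ⊆ Set.Icc (0:ℝ) 1 :=
          Set.Icc_subset_Icc hw.1 hz.2
        obtain ⟨u, hu, hueq⟩ := exists_hasDerivAt_eq_slope (fun t => φ t y)
          (fun t => φ' t y) hlt
          (fun t ht => ((hC1 y t (hsub' ht)).continuousAt).continuousWithinAt)
          (fun t ht => hC1 y t (hsub' (Set.Ioo_subset_Icc_self ht)))
        have hzw : z - w ≠ 0 := ne_of_gt (sub_pos.2 hlt)
        have heq : φ z y - φ w y = φ' u y * (z - w) := by
          field_simp at hueq; linarith [hueq]
        rw [heq, abs_mul, abs_of_pos (sub_pos.2 hlt)]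
        have hbd' : |φ' u y| ≤ M' := by
          have := hM' (u, y) ⟨hsub' (Set.Ioo_subset_Icc_self hu), hy⟩
          simpa [Real.norm_eq_abs] using this
        exact mul_le_mul_of_nonneg_right hbd' (by linarith)
    intro y hy w hw z hz
    rcases le_total w z with h | h
    · rw [abs_of_nonneg (by linarith : (0:ℝ) ≤ z - w)]
      exact main y hy w hw z hz h
    · rw [abs_sub_comm, abs_sub_comm z w, abs_of_nonneg (by linarith : (0:ℝ) ≤ w - z)]
      exact main y hy z hz w hw h
  -- g is continuous on [0,1]
  have hgcont : ContinuousOn g (Set.Icc 0 1) := by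
    have : LipschitzOnWith (Real.toNNReal (M' + K * d)) g (Set.Icc 0 1) := by
      apply LipschitzOnWith.of_dist_le_mul
      intro z hz w hw
      have h1 : |φ z (γ z) - φ w (γ z)| ≤ M' * |z - w| :=
        hTime (γ z) (Set.mem_image_of_mem γ hz) w hw z hz
      have h2 : dist (φ w (γ z)) (φ w (γ w)) ≤ K * dist (γ z) (γ w) :=
        (hK w hw).dist_le_mul _ _
      have h3 : dist (γ z) (γ w) = |z - w| * d := hγd z hz w hw
      have h4 : dist (g z) (g w) ≤ (M' + K * d) * |z - w| := by
        rw [Real.dist_eq]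
        have : |φ z (γ z) - φ w (γ w)| ≤
            |φ z (γ z) - φ w (γ z)| + |φ w (γ z) - φ w (γ w)| := by
          calc |φ z (γ z) - φ w (γ w)|
              = |(φ z (γ z) - φ w (γ z)) + (φ w (γ z) - φ w (γ w))| := by ring_nf
            _ ≤ _ := abs_add_le _ _
        have h2' : |φ w (γ z) - φ w (γ w)| ≤ K * (|z - w| * d) := by
          rw [← Real.dist_eq, ← h3]; exact h2
        calc |φ z (γ z) - φ w (γ w)| ≤ M' * |z - w| + K * (|z - w| * d) := by
              exact le_trans this (add_le_add h1 h2')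
          _ = (M' + K * d) * |z - w| := by ring
      calc dist (g z) (g w) ≤ (M' + K * d) * |z - w| := h4
        _ ≤ (Real.toNNReal (M' + K * d) : ℝ) * dist z w := by
            rw [Real.dist_eq, Real.coe_toNNReal']
            exact mul_le_mul_of_nonneg_right (le_max_left _ _) (abs_nonneg _)
    exact this.continuousOn
  -- key differential inequality
  have key : ∀ s ∈ Set.Ico (0:ℝ) 1, ∀ r : ℝ, C < r →
      ∀ᶠ z in nhdsWithin s (Set.Ioi s), (g z - g s) / (z - s) < r := by
    intro s hs r hr
    have hsIcc : s ∈ Set.Icc (0:ℝ) 1 := ⟨hs.1, hs.2.le⟩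
    set L : ℝ := lipSlope (φ s) (γ s) with hLdef
    -- main algebraic inequality
    have hmain : φ' s (γ s) + L * d ≤ C := by
      have h := hsub s hsIcc (γ s)
      have hC4 : C * (4 * a) = d ^ 2 := by
        rw [hCdef]; field_simp
      nlinarith [sq_nonneg (2 * a * L - d), mul_nonneg hb (sq_nonneg (φ s (γ s))), ha]
    set ε : ℝ := (r - C) / (2 * (1 + d)) with hεdef
    have hε : 0 < ε := by
      apply div_pos (by linarith) (by nlinarith)
    have hεeq : ε * (1 + d) = (r - C) / 2 := by
      rw [hεdef]; field_simp
    -- continuity of φ' at (s, γ s)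
    obtain ⟨δ, hδ0, hδ⟩ := Metric.continuousAt_iff.mp hcont.continuousAt ε hε
    set δ' : ℝ := δ / (d + 1) with hδ'def
    have hδ'0 : 0 < δ' := div_pos hδ0 (by linarith)
    have hδ'le : δ' ≤ δ := by
      rw [hδ'def, div_le_iff₀ (by linarith : (0:ℝ) < d + 1)]
      nlinarith
    -- the slope estimate along the geodesic
    have hB4 : ∀ᶠ z in nhdsWithin s (Set.Ioi s), z ∈ Set.Ioo s 1 →
        φ s (γ z) - φ s (γ s) ≤ (L + ε) * ((z - s) * d) := by
      rcases hd0.eq_or_lt with hdd | hdd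
      · refine Filter.Eventually.of_forall ?_
        intro z hz
        have hzIcc : z ∈ Set.Icc (0:ℝ) 1 := ⟨le_trans hs.1 hz.1.le, hz.2.le⟩
        have : γ z = γ s := by
          have := hγd z hzIcc s hsIcc
          rw [← hdd, mul_zero] at this
          exact dist_eq_zero.mp this
        rw [this, ← hdd]
        simp
      · -- d > 0
        have hbound : IsBoundedUnder (· ≤ ·) (nhdsWithin (γ s) {γ s}ᶜ)
            (fun y => |φ s (γ s) - φ s y| / dist (γ s) y) := by
          apply Filter.isBoundedUnder_of
          refine ⟨(K : ℝ), fun y => ?_⟩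
          rcases eq_or_lt_of_le (dist_nonneg : (0:ℝ) ≤ dist (γ s) y) with h | h
          · rw [← h, div_zero]; exact K.coe_nonneg
          · rw [div_le_iff₀ h]
            have := (hK s hsIcc).dist_le_mul (γ s) y
            rwa [Real.dist_eq] at this
        have hlim : Filter.limsup (fun y => |φ s (γ s) - φ s y| / dist (γ s) y)
            (nhdsWithin (γ s) {γ s}ᶜ) < L + ε := by
          have : Filter.limsup (fun y => |φ s (γ s) - φ s y| / dist (γ s) y)
              (nhdsWithin (γ s) {γ s}ᶜ) = L := rfl
          rw [this]; linarith
        have hev := Filter.eventually_lt_of_limsup_lt hlim hbound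
        obtain ⟨ρ, hρ0, hρ⟩ := Metric.mem_nhdsWithin_iff.mp hev
        have hmem' : s ∈ Set.Ico s (s + ρ / d) :=
          ⟨le_refl s, lt_add_of_pos_right s (div_pos hρ0 hdd)⟩
        filter_upwards [Ioo_mem_nhdsGT_of_mem hmem'] with z hz hzIoo
        have hzIcc : z ∈ Set.Icc (0:ℝ) 1 := ⟨le_trans hs.1 hzIoo.1.le, hzIoo.2.le⟩
        have hts : 0 < z - s := sub_pos.mpr hz.1
        have hdist : dist (γ s) (γ z) = (z - s) * d := by
          rw [hγd s hsIcc z hzIcc, abs_sub_comm, abs_of_pos hts]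
        have hpos : 0 < dist (γ s) (γ z) := by
          rw [hdist]; exact mul_pos hts hdd
        have hlt : (z - s) * d < ρ := by
          have : z - s < ρ / d := by linarith [hz.2]
          exact (lt_div_iff₀ hdd).mp this
        have hmem : γ z ∈ Metric.ball (γ s) ρ ∩ {γ s}ᶜ := by
          constructor
          · rw [Metric.mem_ball, dist_comm, hdist]; exact hlt
          · exact (dist_pos.mp hpos).symm
        have hq := hρ hmem
        simp only [Set.mem_setOf_eq] at hq
        have h2 : |φ s (γ s) - φ s (γ z)| < (L + ε) * ((z - s) * d) := by
          rw [div_lt_iff₀ hpos] at hq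
          rwa [hdist] at hq
        have h3 : φ s (γ z) - φ s (γ s) ≤ |φ s (γ s) - φ s (γ z)| := by
          rw [abs_sub_comm]; exact le_abs_self _
        linarith
    have hmem1 : s ∈ Set.Ico s 1 := ⟨le_refl s, hs.2⟩
    have hmem2 : s ∈ Set.Ico s (s + δ') := ⟨le_refl s, lt_add_of_pos_right s hδ'0⟩
    filter_upwards [Ioo_mem_nhdsGT_of_mem hmem1, Ioo_mem_nhdsGT_of_mem hmem2, hB4]
      with z hz1 hz2 hz3
    have hts : 0 < z - s := sub_pos.mpr hz1.1
    have hzIcc : z ∈ Set.Icc (0:ℝ) 1 := ⟨le_trans hs.1 hz1.1.le, hz1.2.le⟩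
    have hsub' : Set.Icc s z ⊆ Set.Icc (0:ℝ) 1 := Set.Icc_subset_Icc hs.1 hzIcc.2
    -- MVT on [s, z]
    obtain ⟨u, huIoo, hueq⟩ := exists_hasDerivAt_eq_slope (fun t => φ t (γ z))
      (fun t => φ' t (γ z)) hz1.1
      (fun t ht => ((hC1 (γ z) t (hsub' ht)).continuousAt).continuousWithinAt)
      (fun t ht => hC1 (γ z) t (hsub' (Set.Ioo_subset_Icc_self ht)))
    have e1 : φ z (γ z) - φ s (γ z) = φ' u (γ z) * (z - s) := by
      field_simp at hueq; linarith [hueq]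
    -- u and γ z are close to (s, γ s)
    have hzs : z - s < δ' := by linarith [hz2.2]
    have hus : |u - s| < δ := by
      rw [abs_of_pos (sub_pos.mpr huIoo.1)]
      linarith [huIoo.2, hδ'le]
    have hγzs : dist (γ z) (γ s) < δ := by
      rw [hγd z hzIcc s hsIcc, abs_of_pos hts]
      have h1 : (z - s) * (d + 1) < δ := by
        have := mul_lt_mul_of_pos_right hzs (by linarith : (0:ℝ) < d + 1)
        rw [hδ'def, div_mul_cancel₀ δ (by linarith : d + 1 ≠ 0)] at this
        exact this
      nlinarith
    have e3 : φ' u (γ z) < φ' s (γ s) + ε := by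
      have hd' : dist ((u, γ z) : ℝ × X) (s, γ s) < δ := by
        rw [Prod.dist_eq]
        exact max_lt (by rwa [Real.dist_eq]) hγzs
      have := hδ hd'
      rw [Real.dist_eq, abs_lt] at this
      linarith [this.1, this.2]
    have e2 : φ s (γ z) - φ s (γ s) ≤ (L + ε) * ((z - s) * d) := hz3 hz1
    have hcoef : φ' s (γ s) + ε + (L + ε) * d < r := by nlinarith
    rw [div_lt_iff₀ hts]
    have e4 := mul_lt_mul_of_pos_right e3 hts
    have e5 := mul_lt_mul_of_pos_right hcoef hts
    have hgz : g z = φ z (γ z) := rfl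
    have hgs : g s = φ s (γ s) := rfl
    rw [hgz, hgs]
    nlinarith [e1, e2, e4, e5]
  -- fencing theorem
  have hfence := image_le_of_liminf_slope_right_le_deriv_boundary
    (f := g) (a := 0) (b := 1) (B := fun t => g 0 + C * t) (B' := fun _ => C)
    hgcont (by simp)
    ((continuous_const.add (continuous_const.mul continuous_id)).continuousOn)
    (fun x _ => by
      have : HasDerivAt (fun t => g 0 + C * t) C x := by
        simpa using ((hasDerivAt_id x).const_mul C).const_add (g 0)
      exact this.hasDerivWithinAt)
    (fun x hx r hr => ((key x hx r hr).mono (fun z hz => by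
      rwa [slope_def_field])).frequently)
  have h1 := hfence (Set.right_mem_Icc.2 zero_le_one)
  have hg1 : g 1 = φ 1 x₁ := by rw [hgdef]; simp [hγ1]
  have hg0 : g 0 = φ 0 x₀ := by rw [hgdef]; simp [hγ0]
  rw [hg1, hg0, mul_one] at h1
  linarith
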